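/- Let δ = −A²−A⁻² and μ = A⁻⁴+1+A⁴ in the fraction field of ℤ[A,A⁻¹], and let Θ, H be polynomial variables. Define P = (1/(A⁸μ))Θ² − (2/(A⁸δμ))ΘH − ((1+A⁸)/(A⁶δμ))H², Q = −(1/(δμ))Θ² + ((A⁻⁶+A⁶)/(δμ))HΘ + ((A⁻⁴+A⁴)/(δμ))H², α = (δH−Θ)/(δμ), β = (δΘ−H)/(δμ). Then (A²/δ)·Θ·P + Θ·P + (α·Q + β·P) + (1/(A²δ))·Θ·P equals (1/(δ²μ²))·[(A⁻¹²+2A⁻⁸+A⁻⁴+1)Θ³ + (3A⁻¹⁰−A⁶+2A⁻⁶+A²+A⁻²)Θ²H + (−A⁸+2A⁻⁸−A⁴−A⁻⁴+1)ΘH² + (−A⁶−A⁻²)H³]. -/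

import Mathlib

open LaurentPolynomial

theorem aux_one_T4 : (1 + T 4 : LaurentPolynomial ℤ) ≠ 0 := by
  have : (1 + T 4 : LaurentPolynomial ℤ) = Polynomial.toLaurent (1 + Polynomial.X ^ 4) := by simp
  rw [this, Polynomial.toLaurent_ne_zero]
  intro h
  have := congrArg (fun p => Polynomial.coeff p 0) h
  simp at this

theorem aux_one_T4_T8 : (1 + T 4 + T 8 : LaurentPolynomial ℤ) ≠ 0 := by
  have : (1 + T 4 + T 8 : LaurentPolynomial ℤ)
      = Polynomial.toLaurent (1 + Polynomial.X ^ 4 + Polynomial.X ^ 8) := by simp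
  rw [this, Polynomial.toLaurent_ne_zero]
  intro h
  have := congrArg (fun p => Polynomial.coeff p 0) h
  simp at this

set_option maxHeartbeats 4000000 in
theorem stmt_8
    (K : Type*) [Field K]
    [Algebra (MvPolynomial (Fin 2) (LaurentPolynomial ℤ)) K]
    [IsFractionRing (MvPolynomial (Fin 2) (LaurentPolynomial ℤ)) K]
    (A Θ H : K)
    (hA : A = algebraMap (MvPolynomial (Fin 2) (LaurentPolynomial ℤ)) K
            (MvPolynomial.C (T 1)))
    (hΘ : Θ = algebraMap (MvPolynomial (Fin 2) (LaurentPolynomial ℤ)) K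
            (MvPolynomial.X 0))
    (hH : H = algebraMap (MvPolynomial (Fin 2) (LaurentPolynomial ℤ)) K
            (MvPolynomial.X 1))
    (δ μ : K)
    (hδ : δ = -A ^ 2 - A⁻¹ ^ 2)
    (hμ : μ = A⁻¹ ^ 4 + 1 + A ^ 4)
    (P Q α β : K)
    (hP : P = (1 / (A ^ 8 * μ)) * Θ ^ 2 - (2 / (A ^ 8 * δ * μ)) * (Θ * H)
            - ((1 + A ^ 8) / (A ^ 6 * δ * μ)) * H ^ 2)
    (hQ : Q = -(1 / (δ * μ)) * Θ ^ 2 + ((A⁻¹ ^ 6 + A ^ 6) / (δ * μ)) * (H * Θ)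
            + ((A⁻¹ ^ 4 + A ^ 4) / (δ * μ)) * H ^ 2)
    (hα : α = (δ * H - Θ) / (δ * μ))
    (hβ : β = (δ * Θ - H) / (δ * μ)) :
    (A ^ 2 / δ) * (Θ * P) + Θ * P + (α * Q + β * P) + (1 / (A ^ 2 * δ)) * (Θ * P)
      = (1 / (δ ^ 2 * μ ^ 2)) *
        ((A⁻¹ ^ 12 + 2 * A⁻¹ ^ 8 + A⁻¹ ^ 4 + 1) * Θ ^ 3
          + (3 * A⁻¹ ^ 10 - A ^ 6 + 2 * A⁻¹ ^ 6 + A ^ 2 + A⁻¹ ^ 2) * (Θ ^ 2 * H)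
          + (-A ^ 8 + 2 * A⁻¹ ^ 8 - A ^ 4 - A⁻¹ ^ 4 + 1) * (Θ * H ^ 2)
          + (-A ^ 6 - A⁻¹ ^ 2) * H ^ 3) := by
  have hinj := IsFractionRing.injective (MvPolynomial (Fin 2) (LaurentPolynomial ℤ)) K
  have hmap : ∀ p : LaurentPolynomial ℤ, p ≠ 0 →
      algebraMap (MvPolynomial (Fin 2) (LaurentPolynomial ℤ)) K (MvPolynomial.C p) ≠ 0 := by
    intro p hp
    rw [map_ne_zero_iff _ hinj]
    exact fun h => hp (by simpa using congrArg (MvPolynomial.coeff 0) h)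
  have hT4 : (T 1 : LaurentPolynomial ℤ) ^ 4 = T 4 := by rw [T_pow]; norm_num
  have hT8 : (T 1 : LaurentPolynomial ℤ) ^ 8 = T 8 := by rw [T_pow]; norm_num
  have hA0 : A ≠ 0 := by rw [hA]; exact hmap _ (isUnit_T 1).ne_zero
  have h4 : A ^ 4 + 1 ≠ 0 := by
    have : A ^ 4 + 1 = algebraMap (MvPolynomial (Fin 2) (LaurentPolynomial ℤ)) K
        (MvPolynomial.C (1 + T 4)) := by
      rw [hA, ← hT4]; push_cast [map_add, map_one, map_pow]; ring
    rw [this]; exact hmap _ aux_one_T4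
  have h8 : A ^ 8 + A ^ 4 + 1 ≠ 0 := by
    have : A ^ 8 + A ^ 4 + 1 = algebraMap (MvPolynomial (Fin 2) (LaurentPolynomial ℤ)) K
        (MvPolynomial.C (1 + T 4 + T 8)) := by
      rw [hA, ← hT4, ← hT8]; push_cast [map_add, map_one, map_pow]; ring
    rw [this]; exact hmap _ aux_one_T4_T8
  have hδ0 : δ ≠ 0 := by
    rw [hδ]
    intro h
    apply h4
    rw [inv_pow] at h
    field_simp at h
    linear_combination -h
  have hμ0 : μ ≠ 0 := by
    rw [hμ]
    intro h
    apply h8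
    rw [inv_pow] at h
    field_simp at h
    linear_combination h
  have hA2 : A⁻¹ ^ 2 = -δ - A ^ 2 := by rw [hδ]; ring
  have hcancel : (A ^ 2 / δ) * (Θ * P) + Θ * P + (1 / (A ^ 2 * δ)) * (Θ * P)
      = ((A ^ 2 + A⁻¹ ^ 2 + δ) / δ) * (Θ * P) := by
    field_simp
    ring
  have hzero : A ^ 2 + A⁻¹ ^ 2 + δ = 0 := by rw [hδ]; ring
  have hL : (A ^ 2 / δ) * (Θ * P) + Θ * P + (α * Q + β * P) + (1 / (A ^ 2 * δ)) * (Θ * P)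
      = α * Q + β * P := by
    have := hcancel
    rw [hzero] at this
    simp at this
    linear_combination this
  rw [hL]
  -- single-fraction forms
  have hαQ : α * Q = ((δ * H - Θ) * (-Θ ^ 2 + (A⁻¹ ^ 6 + A ^ 6) * (H * Θ)
        + (A⁻¹ ^ 4 + A ^ 4) * H ^ 2)) / (δ ^ 2 * μ ^ 2) := by
    rw [hα, hQ]; ring
  have hβP : β * P = ((δ * Θ - H) * (δ * Θ ^ 2 - 2 * (Θ * H)
        - (1 + A ^ 8) * A ^ 2 * H ^ 2)) / (A ^ 8 * (δ ^ 2 * μ ^ 2)) := by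
    have hP1 : P = (δ * Θ ^ 2 - 2 * (Θ * H) - (1 + A ^ 8) * A ^ 2 * H ^ 2)
        / (A ^ 8 * δ * μ) := by
      have hW : A ^ 16 * A⁻¹ ^ 16 * (δ * δ⁻¹) * (μ ^ 2 * μ⁻¹ ^ 2) = 1 := by
        rw [← mul_pow, ← mul_pow, mul_inv_cancel₀ hA0, mul_inv_cancel₀ hδ0,
          mul_inv_cancel₀ hμ0, one_pow, one_pow]; ring
      rw [hP]; field_simp
    rw [hβ, hP1, div_mul_div_comm]; ring
  set S : K := (A⁻¹ ^ 12 + 2 * A⁻¹ ^ 8 + A⁻¹ ^ 4 + 1) * Θ ^ 3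
      + (3 * A⁻¹ ^ 10 - A ^ 6 + 2 * A⁻¹ ^ 6 + A ^ 2 + A⁻¹ ^ 2) * (Θ ^ 2 * H)
      + (-A ^ 8 + 2 * A⁻¹ ^ 8 - A ^ 4 - A⁻¹ ^ 4 + 1) * (Θ * H ^ 2)
      + (-A ^ 6 - A⁻¹ ^ 2) * H ^ 3 with hS
  have c1 : A ^ 8 + δ ^ 2 = A ^ 8 * (A⁻¹ ^ 12 + 2 * A⁻¹ ^ 8 + A⁻¹ ^ 4 + 1) := by
    rw [hδ]; field_simp; ring
  have c2 : -(A ^ 8 * (δ + (A⁻¹ ^ 6 + A ^ 6))) - 3 * δ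
      = A ^ 8 * (3 * A⁻¹ ^ 10 - A ^ 6 + 2 * A⁻¹ ^ 6 + A ^ 2 + A⁻¹ ^ 2) := by
    rw [hδ]; field_simp; ring
  have c3 : A ^ 8 * ((A⁻¹ ^ 6 + A ^ 6) * δ - (A⁻¹ ^ 4 + A ^ 4))
      + (2 - (1 + A ^ 8) * A ^ 2 * δ)
      = A ^ 8 * (-A ^ 8 + 2 * A⁻¹ ^ 8 - A ^ 4 - A⁻¹ ^ 4 + 1) := by
    have h14 : A ^ 14 * A⁻¹ ^ 14 = 1 := by
      rw [← mul_pow, mul_inv_cancel₀ hA0, one_pow]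
    rw [hδ]; simp only [inv_pow]; field_simp; ring
  have c4 : A ^ 8 * ((A⁻¹ ^ 4 + A ^ 4) * δ) + (1 + A ^ 8) * A ^ 2
      = A ^ 8 * (-A ^ 6 - A⁻¹ ^ 2) := by
    rw [hδ]; simp only [inv_pow]; field_simp; ring
  have key : A ^ 8 * ((δ * H - Θ) * (-Θ ^ 2 + (A⁻¹ ^ 6 + A ^ 6) * (H * Θ)
        + (A⁻¹ ^ 4 + A ^ 4) * H ^ 2))
      + (δ * Θ - H) * (δ * Θ ^ 2 - 2 * (Θ * H) - (1 + A ^ 8) * A ^ 2 * H ^ 2)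
      = A ^ 8 * S := by
    rw [hS]
    linear_combination Θ ^ 3 * c1 + (Θ ^ 2 * H) * c2 + (Θ * H ^ 2) * c3 + H ^ 3 * c4
  have hd1 : (δ ^ 2 * μ ^ 2 : K) ≠ 0 :=
    mul_ne_zero (pow_ne_zero _ hδ0) (pow_ne_zero _ hμ0)
  have hd2 : (A ^ 8 * (δ ^ 2 * μ ^ 2) : K) ≠ 0 := mul_ne_zero (pow_ne_zero _ hA0) hd1
  rw [hαQ, hβP, div_add_div _ _ hd1 hd2,
    show (1 / (δ ^ 2 * μ ^ 2)) * S = S / (δ ^ 2 * μ ^ 2) by ring,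
    div_eq_div_iff (mul_ne_zero hd1 hd2) hd1]
  linear_combination (δ ^ 2 * μ ^ 2 * (δ ^ 2 * μ ^ 2)) * key
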